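/- Let X be a compact metric space, A a unital simple C*-algebra with nonempty tracial state space T(A), and φ : C(X) → A a unital monomorphism. Then there exists a non-decreasing function Δ : (0,1) → (0,1) such that μ_{τ∘φ}(O_a) ≥ Δ(a) for every tracial state τ ∈ T(A) and every open ball O_a of X with radius a ∈ (0,1). -/

import Mathlib

open MeasureTheory

/-- A tracial state on a unital C*-algebra. -/
def IsTracialState {A : Type*} [Ring A] [StarRing A] [Algebra ℂ A] [TopologicalSpace A]
    (τ : A →ₗ[ℂ] ℂ) : Prop :=
  Continuous τ ∧ τ 1 = 1 ∧ (∀ a : A, 0 ≤ (τ (star a * a)).re ∧ (τ (star a * a)).im = 0) ∧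
    ∀ a b : A, τ (a * b) = τ (b * a)

section Tracial
variable {A : Type*} [CStarAlgebra A] [PartialOrder A] [StarOrderedRing A] {τ : A →ₗ[ℂ] ℂ}

lemma ts_pos (hτ : IsTracialState τ) {p : A} (hp : 0 ≤ p) : 0 ≤ (τ p).re ∧ (τ p).im = 0 := by
  rw [StarOrderedRing.nonneg_iff] at hp
  induction hp using AddSubmonoid.closure_induction with
  | mem x hx => obtain ⟨s, rfl⟩ := hx; exact hτ.2.2.1 s
  | zero => simp
  | add x y hx hy ihx ihy =>
      rw [map_add]
      exact ⟨by simpa [Complex.add_re] using add_nonneg ihx.1 ihy.1,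
        by simp [Complex.add_im, ihx.2, ihy.2]⟩

lemma ts_mono (hτ : IsTracialState τ) {x y : A} (h : x ≤ y) :
    (τ x).re ≤ (τ y).re ∧ (τ x).im = (τ y).im := by
  have h0 : 0 ≤ y - x := sub_nonneg.mpr h
  have h1 := ts_pos hτ h0
  rw [map_sub] at h1
  simp only [Complex.sub_re, Complex.sub_im] at h1
  constructor <;> linarith [h1.1, h1.2]

lemma ts_algebraMap (hτ : IsTracialState τ) (t : ℝ) : τ (algebraMap ℝ A t) = t := by
  have h : algebraMap ℝ A t = (t : ℂ) • (1 : A) := by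
    rw [IsScalarTower.algebraMap_apply ℝ ℂ A, Algebra.algebraMap_eq_smul_one]
    norm_num
  rw [h, _root_.map_smul, hτ.2.1, smul_eq_mul, mul_one]

lemma ts_sa (hτ : IsTracialState τ) {h : A} (hh : IsSelfAdjoint h) :
    (τ h).im = 0 ∧ |(τ h).re| ≤ ‖h‖ := by
  have hup := ts_mono hτ hh.le_algebraMap_norm_self
  have hlo := ts_mono hτ hh.neg_algebraMap_norm_le_self
  rw [ts_algebraMap hτ] at hup
  rw [map_neg, ts_algebraMap hτ] at hlo
  simp only [Complex.ofReal_re, Complex.ofReal_im, Complex.neg_re, Complex.neg_im] at hup hlo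
  refine ⟨hup.2, abs_le.mpr ⟨?_, hup.1⟩⟩
  simpa using hlo.1

lemma ts_decomp (d : A) : ∃ h k : A, IsSelfAdjoint h ∧ IsSelfAdjoint k ∧
    d = h + Complex.I • k ∧ ‖h‖ ≤ ‖d‖ ∧ ‖k‖ ≤ ‖d‖ := by
  refine ⟨((2:ℂ)⁻¹) • (d + star d), (Complex.I * (2:ℂ)⁻¹) • (star d - d), ?_, ?_, ?_, ?_, ?_⟩
  · rw [IsSelfAdjoint, star_smul, star_add, star_star]
    simp only [RCLike.star_def, map_inv₀, Complex.conj_ofNat]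
    rw [add_comm]
  · rw [IsSelfAdjoint, star_smul, star_sub, star_star]
    simp only [RCLike.star_def, map_mul, map_inv₀, Complex.conj_ofNat, Complex.conj_I]
    rw [show (-Complex.I * (2:ℂ)⁻¹) = -(Complex.I * (2:ℂ)⁻¹) by ring, neg_smul, smul_sub,
      smul_sub, neg_sub]
  · rw [smul_smul]
    rw [show Complex.I * (Complex.I * (2:ℂ)⁻¹) = -(2:ℂ)⁻¹ by
      rw [← mul_assoc, Complex.I_mul_I]; ring]
    rw [neg_smul, smul_sub, smul_add]
    have h2 : (2:ℂ)⁻¹ • d + (2:ℂ)⁻¹ • d = d := by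
      rw [← add_smul]; norm_num
    abel_nf
    rw [two_smul, h2]
  · calc ‖((2:ℂ)⁻¹) • (d + star d)‖ = 2⁻¹ * ‖d + star d‖ := by
          rw [norm_smul]; norm_num
      _ ≤ 2⁻¹ * (‖d‖ + ‖star d‖) := by gcongr; exact norm_add_le _ _
      _ = ‖d‖ := by rw [norm_star]; ring
  · calc ‖(Complex.I * (2:ℂ)⁻¹) • (star d - d)‖ = 2⁻¹ * ‖star d - d‖ := by
          rw [norm_smul]; simp
      _ ≤ 2⁻¹ * (‖star d‖ + ‖d‖) := by gcongr; exact norm_sub_le _ _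
      _ = ‖d‖ := by rw [norm_star]; ring

lemma ts_re_bound (hτ : IsTracialState τ) (d : A) : |(τ d).re| ≤ ‖d‖ := by
  obtain ⟨h, k, hh, hk, rfl, hhn, hkn⟩ := ts_decomp d
  rw [map_add, _root_.map_smul]
  have h1 := ts_sa hτ hh
  have h2 := ts_sa hτ hk
  have : (τ h + Complex.I • τ k).re = (τ h).re := by
    simp [Complex.add_re, Complex.I_mul_re, h2.1]
  rw [this]
  exact h1.2.trans hhn

end Tracial

section Key
variable {A : Type*} [CStarAlgebra A] [PartialOrder A] [StarOrderedRing A] {τ : A →ₗ[ℂ] ℂ}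

lemma ts_conj_le (hτ : IsTracialState τ) {b : A} (hb : 0 ≤ b) {e : A} (he : IsSelfAdjoint e) :
    |(τ (CFC.sqrt b * e * CFC.sqrt b)).re| ≤ ‖e‖ * (τ b).re ∧
      (τ (CFC.sqrt b * e * CFC.sqrt b)).im = 0 := by
  set r := CFC.sqrt b with hrdef
  have hrr : r * r = b := CFC.sqrt_mul_sqrt_self b hb
  have hrsa : IsSelfAdjoint r := IsSelfAdjoint.of_nonneg (CFC.sqrt_nonneg (a := b))
  have key : ∀ (e' : A) (t : ℝ), e' ≤ algebraMap ℝ A t →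
      (τ (r * e' * r)).re ≤ t * (τ b).re ∧ (τ (r * e' * r)).im = t * (τ b).im := by
    intro e' t ht
    have hle : r * e' * r ≤ t • b := by
      have := star_left_conjugate_le_conjugate ht r
      rw [hrsa.star_eq] at this
      refine this.trans_eq ?_
      rw [Algebra.algebraMap_eq_smul_one, mul_smul_comm, mul_one, smul_mul_assoc, hrr]
    have h1 := ts_mono hτ hle
    have h2 : τ (t • b) = t • τ b := τ.map_smul_of_tower t b
    rw [h2] at h1
    simpa [Complex.real_smul, Complex.ofReal_mul'] using h1
  have hup := key e ‖e‖ he.le_algebraMap_norm_self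
  have hlo' : -e ≤ algebraMap ℝ A ‖e‖ := by
    rw [← norm_neg]; exact IsSelfAdjoint.le_algebraMap_norm_self he.neg
  have hbim : (τ b).im = 0 := (ts_pos hτ hb).2
  have hlo : -(τ (r * e * r)).re ≤ ‖e‖ * (τ b).re := by
    have h3 := (key (-e) ‖e‖ hlo').1
    rwa [mul_neg, neg_mul, map_neg, Complex.neg_re] at h3
  exact ⟨abs_le.mpr ⟨by linarith, hup.1⟩, by rw [hup.2, hbim, mul_zero]⟩


lemma ts_mul_le (hτ : IsTracialState τ) {b : A} (hb : 0 ≤ b) (c : A) :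
    |(τ (b * c)).re| ≤ ‖c‖ * (τ b).re := by
  set r := CFC.sqrt b with hrdef
  have hrr : r * r = b := CFC.sqrt_mul_sqrt_self b hb
  have h1 : τ (b * c) = τ (r * c * r) := by
    rw [← hrr, mul_assoc, hτ.2.2.2 r (r * c), mul_assoc]
  obtain ⟨h, k, hh, hk, hdc, hhn, hkn⟩ := ts_decomp c
  have hsplit : r * c * r = r * h * r + Complex.I • (r * k * r) := by
    rw [hdc, mul_add, add_mul, mul_smul_comm, smul_mul_assoc]
  have hH := ts_conj_le hτ hb hh
  have hK := ts_conj_le hτ hb hk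
  have hre : (τ (b * c)).re = (τ (r * h * r)).re := by
    rw [h1, hsplit, map_add, _root_.map_smul]
    simp [Complex.add_re, Complex.I_mul_re, hrdef, hK.2]
  rw [hre]
  refine hH.1.trans ?_
  have hb0 : 0 ≤ (τ b).re := (ts_pos hτ hb).1
  exact mul_le_mul_of_nonneg_right hhn hb0

lemma exists_uniform (hsimple : ∀ I : TwoSidedIdeal A, IsClosed (I : Set A) → I = ⊥ ∨ I = ⊤)
    {b : A} (hb : 0 ≤ b) (hbne : b ≠ 0) :
    ∃ c : ℝ, 0 < c ∧ ∀ τ : A →ₗ[ℂ] ℂ, IsTracialState τ → c ≤ (τ b).re := by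
  classical
  set G : Set A := Set.range (fun p : A × A => p.1 * b * p.2) with hG
  have habs_l : ∀ x : A, ∀ s ∈ AddSubgroup.closure G, x * s ∈ AddSubgroup.closure G := by
    intro x s hs
    induction hs using AddSubgroup.closure_induction with
    | mem y hy =>
        obtain ⟨⟨u, v⟩, rfl⟩ := hy
        exact AddSubgroup.subset_closure ⟨(x * u, v), by simp [mul_assoc]⟩
    | zero => simpa using (AddSubgroup.closure G).zero_mem
    | add u v hu hv ihu ihv => rw [mul_add]; exact add_mem ihu ihv
    | neg u hu ihu => rw [mul_neg]; exact neg_mem ihu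
  have habs_r : ∀ x : A, ∀ s ∈ AddSubgroup.closure G, s * x ∈ AddSubgroup.closure G := by
    intro x s hs
    induction hs using AddSubgroup.closure_induction with
    | mem y hy =>
        obtain ⟨⟨u, v⟩, rfl⟩ := hy
        exact AddSubgroup.subset_closure ⟨(u, v * x), by simp [mul_assoc]⟩
    | zero => simpa using (AddSubgroup.closure G).zero_mem
    | add u v hu hv ihu ihv => rw [add_mul]; exact add_mem ihu ihv
    | neg u hu ihu => rw [neg_mul]; exact neg_mem ihu
  set Jc : Set A := closure ((AddSubgroup.closure G : Set A)) with hJc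
  set I : TwoSidedIdeal A := TwoSidedIdeal.mk' Jc
    (subset_closure (zero_mem _))
    (fun {x y} hx hy => by
      simpa using map_mem_closure₂ continuous_add hx hy (fun a ha b hb => add_mem ha hb))
    (fun {x} hx => by
      simpa using map_mem_closure continuous_neg hx (fun a ha => neg_mem ha))
    (fun {x y} hy => by
      simpa using map_mem_closure (continuous_const.mul continuous_id) hy
        (fun a ha => habs_l x a ha))
    (fun {x y} hx => by
      simpa using map_mem_closure (continuous_id.mul continuous_const) hx
        (fun a ha => habs_r y a ha)) with hI
  have hIc : IsClosed (I : Set A) := by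
    rw [hI, TwoSidedIdeal.coe_mk']; exact isClosed_closure
  have hbI : b ∈ I := by
    rw [hI, TwoSidedIdeal.mem_mk']
    exact subset_closure (AddSubgroup.subset_closure ⟨(1, 1), by simp⟩)
  rcases hsimple I hIc with h | h
  · rw [h, TwoSidedIdeal.mem_bot] at hbI
    exact absurd hbI hbne
  · have h1 : (1 : A) ∈ Jc := by
      have : (1 : A) ∈ I := by rw [h]; exact TwoSidedIdeal.mem_top A
      rwa [hI, TwoSidedIdeal.mem_mk'] at this
    rw [hJc, Metric.mem_closure_iff] at h1
    obtain ⟨s, hsJ, hs⟩ := h1 4⁻¹ (by norm_num)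
    rw [dist_eq_norm] at hs
    have hKex : ∃ K : ℝ, 0 ≤ K ∧ ∀ τ : A →ₗ[ℂ] ℂ, IsTracialState τ →
        |(τ s).re| ≤ K * (τ b).re := by
      clear hs
      induction hsJ using AddSubgroup.closure_induction with
      | mem y hy =>
          obtain ⟨⟨u, v⟩, rfl⟩ := hy
          refine ⟨‖v * u‖, norm_nonneg _, fun τ hτ => ?_⟩
          have : τ (u * b * v) = τ (b * (v * u)) := by
            rw [mul_assoc, hτ.2.2.2 u (b * v), mul_assoc]
          rw [this]
          exact ts_mul_le hτ hb (v * u)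
      | zero => exact ⟨0, le_refl _, fun τ hτ => by simp⟩
      | add u v hu hv ihu ihv =>
          obtain ⟨K1, hK1, h1⟩ := ihu
          obtain ⟨K2, hK2, h2⟩ := ihv
          refine ⟨K1 + K2, by positivity, fun τ hτ => ?_⟩
          rw [map_add]
          calc |(τ u + τ v).re| ≤ |(τ u).re| + |(τ v).re| := by
                rw [Complex.add_re]; exact abs_add_le _ _
            _ ≤ K1 * (τ b).re + K2 * (τ b).re := add_le_add (h1 τ hτ) (h2 τ hτ)
            _ = (K1 + K2) * (τ b).re := by ring
      | neg u hu ihu =>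
          obtain ⟨K, hK, h1⟩ := ihu
          exact ⟨K, hK, fun τ hτ => by rw [map_neg, Complex.neg_re, abs_neg]; exact h1 τ hτ⟩
    obtain ⟨K, hK0, hKb⟩ := hKex
    refine ⟨3 / (4 * (K + 1)), by positivity, fun τ hτ => ?_⟩
    have hrb := ts_re_bound hτ (s - 1)
    have hsre : (τ s).re = 1 + (τ (s - 1)).re := by
      rw [map_sub, hτ.2.1, Complex.sub_re]; norm_num
    have hn : ‖s - 1‖ < 4⁻¹ := by rwa [norm_sub_rev]
    have h34 : (3 : ℝ) / 4 ≤ (τ s).re := by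
      rw [hsre]
      have := abs_le.mp hrb
      linarith [this.1]
    have hb0 : 0 ≤ (τ b).re := (ts_pos hτ hb).1
    have hKs := hKb τ hτ
    rw [div_le_iff₀ (by positivity)]
    nlinarith [le_abs_self (τ s).re]

end Key

/-- For a unital monomorphism `φ : C(X) → A` into a unital simple C*-algebra with
nonempty tracial state space, there is a non-decreasing `Δ : (0,1) → (0,1)` with
`μ_{τ∘φ}(O_a) ≥ Δ(a)` for every tracial state `τ` and every open ball of radius
`a ∈ (0,1)`. -/
theorem stmt_8 {X : Type*} [MetricSpace X] [CompactSpace X] [MeasurableSpace X] [BorelSpace X]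
    {A : Type*} [CStarAlgebra A]
    (hsimple : ∀ I : TwoSidedIdeal A, IsClosed (I : Set A) → I = ⊥ ∨ I = ⊤)
    (hT : ∃ τ : A →ₗ[ℂ] ℂ, IsTracialState τ)
    (φ : C(X, ℂ) →⋆ₐ[ℂ] A) (hinj : Function.Injective φ) :
    ∃ Δ : ℝ → ℝ,
      (∀ a b : ℝ, 0 < a → a ≤ b → b < 1 → Δ a ≤ Δ b) ∧
      (∀ a : ℝ, 0 < a → a < 1 → 0 < Δ a ∧ Δ a < 1) ∧
      ∀ τ : A →ₗ[ℂ] ℂ, IsTracialState τ →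
        ∀ μ : Measure X, IsProbabilityMeasure μ →
          (∀ f : C(X, ℂ), τ (φ f) = ∫ z, f z ∂μ) →
          ∀ a : ℝ, 0 < a → a < 1 → ∀ z : X,
            ENNReal.ofReal (Δ a) ≤ μ (Metric.ball z a) := by
  classical
  letI : PartialOrder A := CStarAlgebra.spectralOrder A
  letI : StarOrderedRing A := CStarAlgebra.spectralOrderedRing A
  -- per-point bound
  have hpt : ∀ a : ℝ, 0 < a → ∀ x0 : X, ∃ c : ℝ, 0 < c ∧
      ∀ τ : A →ₗ[ℂ] ℂ, IsTracialState τ → ∀ μ : Measure X, IsProbabilityMeasure μ →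
        (∀ f : C(X, ℂ), τ (φ f) = ∫ z, f z ∂μ) →
        ∀ z : X, dist z x0 < a / 4 → ENNReal.ofReal c ≤ μ (Metric.ball z a) := by
    intro a ha x0
    set gR : C(X, ℝ) := ⟨fun x => max 0 (1 - (4 / a) * dist x x0),
      (continuous_const.max (continuous_const.sub (continuous_const.mul
        (continuous_id.dist continuous_const))))⟩ with hgR
    set hC : C(X, ℂ) := ⟨fun x => (Real.sqrt (gR x) : ℂ),
      Complex.continuous_ofReal.comp (Real.continuous_sqrt.comp gR.continuous)⟩ with hhC
    set fC : C(X, ℂ) := star hC * hC with hfC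
    have hfval : ∀ x, fC x = ((gR x : ℝ) : ℂ) := by
      intro x
      simp only [hfC, hhC, ContinuousMap.mul_apply, ContinuousMap.star_apply,
        ContinuousMap.coe_mk, Complex.star_def, Complex.conj_ofReal]
      rw [← Complex.ofReal_mul, Real.mul_self_sqrt (show (0:ℝ) ≤ gR x from le_max_left _ _)]
    have hf0 : 0 ≤ φ fC := by rw [map_mul, map_star]; exact star_mul_self_nonneg _
    have hfne : φ fC ≠ 0 := by
      intro hc
      have h0 : fC = 0 := hinj (by rw [hc, map_zero])
      have h1 : fC x0 = 1 := by
        rw [hfval]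
        simp [hgR]
      rw [h0] at h1
      simp at h1
    obtain ⟨c, hc, hcb⟩ := exists_uniform hsimple hf0 hfne
    refine ⟨c, hc, fun τ hτ μ hμ hrep z hz => ?_⟩
    have hcs : ∀ g : C(X, ℝ), Integrable (fun x => g x) μ :=
      fun g => g.continuous.integrable_of_hasCompactSupport
        ((isClosed_tsupport _).isCompact)
    have h1 : (τ (φ fC)).re = ∫ x, gR x ∂μ := by
      rw [hrep fC]
      have h2 : ∫ x, fC x ∂μ = ((∫ x, gR x ∂μ : ℝ) : ℂ) := by
        rw [show (fun x => fC x) = fun x => ((gR x : ℝ) : ℂ) from funext hfval]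
        exact integral_ofReal
      rw [h2, Complex.ofReal_re]
    have h2 : ∫ x, gR x ∂μ ≤ (μ (Metric.ball z a)).toReal := by
      have hind : Integrable (Set.indicator (Metric.ball z a) (fun _ => (1 : ℝ))) μ :=
        (integrable_const 1).indicator measurableSet_ball
      have hmono : ∀ x, gR x ≤ Set.indicator (Metric.ball z a) (fun _ => (1 : ℝ)) x := by
        intro x
        by_cases hx : x ∈ Metric.ball z a
        · rw [Set.indicator_of_mem hx]
          simp only [hgR, ContinuousMap.coe_mk]
          have : 0 ≤ (4 / a) * dist x x0 := by positivity
          refine max_le (by norm_num) (by linarith)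
        · rw [Set.indicator_of_notMem hx]
          simp only [hgR, ContinuousMap.coe_mk]
          have hxz : a ≤ dist x z := by
            rw [Metric.mem_ball] at hx; linarith [not_lt.mp hx]
          have htri : dist x z ≤ dist x x0 + dist z x0 := by
            rw [dist_comm z x0]; exact dist_triangle x x0 z
          have hd : 3 * a / 4 ≤ dist x x0 := by linarith
          have h4 : (3 : ℝ) ≤ (4 / a) * dist x x0 := by
            rw [show (3:ℝ) = (4 / a) * (3 * a / 4) by field_simp]
            exact mul_le_mul_of_nonneg_left hd (by positivity)
          refine max_le le_rfl (by linarith)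
      calc ∫ x, gR x ∂μ ≤ ∫ x, Set.indicator (Metric.ball z a) (fun _ => (1 : ℝ)) x ∂μ :=
            integral_mono (hcs gR) hind hmono
        _ = (μ (Metric.ball z a)).toReal := by
            rw [integral_indicator_const (1 : ℝ) measurableSet_ball]; simp; rfl
    have h3 := hcb τ hτ
    exact ENNReal.ofReal_le_of_le_toReal (by linarith)
  -- uniform bound over all centers via compactness
  have bb : ∀ a : ℝ, 0 < a → ∃ c : ℝ, (0 < c ∧ c ≤ 1 / 2) ∧
      ∀ τ : A →ₗ[ℂ] ℂ, IsTracialState τ → ∀ μ : Measure X, IsProbabilityMeasure μ →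
        (∀ f : C(X, ℂ), τ (φ f) = ∫ z, f z ∂μ) →
        ∀ z : X, ENNReal.ofReal c ≤ μ (Metric.ball z a) := by
    intro a ha
    choose cf hcf0 hcf using hpt a ha
    obtain ⟨t, ht⟩ := isCompact_univ.elim_finite_subcover
      (fun x : X => Metric.ball x (a / 4)) (fun _ => Metric.isOpen_ball)
      (fun x _ => Set.mem_iUnion.mpr ⟨x, Metric.mem_ball_self (by positivity)⟩)
    by_cases hne : t.Nonempty
    · refine ⟨min (1 / 2) (t.inf' hne cf), ⟨lt_min (by norm_num)
        ((Finset.lt_inf'_iff hne).mpr fun x _ => hcf0 x), min_le_left _ _⟩,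
        fun τ hτ μ hμ hrep z => ?_⟩
      obtain ⟨x0, hx0t, hx0⟩ := Set.mem_iUnion₂.mp (ht (Set.mem_univ z))
      calc ENNReal.ofReal (min (1 / 2) (t.inf' hne cf))
          ≤ ENNReal.ofReal (cf x0) :=
            ENNReal.ofReal_le_ofReal ((min_le_right _ _).trans (Finset.inf'_le cf hx0t))
        _ ≤ μ (Metric.ball z a) :=
            hcf x0 τ hτ μ hμ hrep z (by rwa [Metric.mem_ball] at hx0)
    · refine ⟨1 / 2, ⟨by norm_num, le_refl _⟩, fun τ hτ μ hμ hrep z => absurd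
        (ht (Set.mem_univ z)) ?_⟩
      rw [Finset.not_nonempty_iff_eq_empty.mp hne]
      simp
  -- package into a monotone Δ
  have bb' : ∀ a : ℝ, ∃ c : ℝ, (0 < c ∧ c ≤ 1 / 2) ∧ (0 < a →
      ∀ τ : A →ₗ[ℂ] ℂ, IsTracialState τ → ∀ μ : Measure X, IsProbabilityMeasure μ →
        (∀ f : C(X, ℂ), τ (φ f) = ∫ z, f z ∂μ) →
        ∀ z : X, ENNReal.ofReal c ≤ μ (Metric.ball z a)) := by
    intro a
    by_cases h : 0 < a
    · obtain ⟨c, hc1, hc2⟩ := bb a h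
      exact ⟨c, hc1, fun _ => hc2⟩
    · exact ⟨1 / 4, ⟨by norm_num, by norm_num⟩, fun h' => absurd h' h⟩
  choose d hd1 hd2 using bb'
  refine ⟨fun a => sSup (d '' Set.Ioc 0 a), ?_, ?_, ?_⟩
  · intro a b ha hab _
    refine csSup_le_csSup ⟨1 / 2, ?_⟩ ⟨d a, ⟨a, ⟨ha, le_rfl⟩, rfl⟩⟩
      (Set.image_mono (Set.Ioc_subset_Ioc_right hab))
    rintro y ⟨x, _, rfl⟩
    exact (hd1 x).2
  · intro a ha _
    have hmem : d a ∈ d '' Set.Ioc 0 a := ⟨a, ⟨ha, le_rfl⟩, rfl⟩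
    have hbdd : BddAbove (d '' Set.Ioc 0 a) := by
      refine ⟨1 / 2, ?_⟩
      rintro y ⟨x, _, rfl⟩
      exact (hd1 x).2
    constructor
    · exact lt_of_lt_of_le (hd1 a).1 (le_csSup hbdd hmem)
    · refine lt_of_le_of_lt (csSup_le ⟨d a, hmem⟩ ?_) (by norm_num : (1:ℝ)/2 < 1)
      rintro y ⟨x, _, rfl⟩
      exact (hd1 x).2
  · intro τ hτ μ hμ hrep a ha _ z
    have hne : μ (Metric.ball z a) ≠ ⊤ := measure_ne_top μ _
    have hΔ : sSup (d '' Set.Ioc 0 a) ≤ (μ (Metric.ball z a)).toReal := by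
      refine csSup_le ⟨d a, ⟨a, ⟨ha, le_rfl⟩, rfl⟩⟩ ?_
      rintro y ⟨x, ⟨hx0, hxa⟩, rfl⟩
      have h1 : ENNReal.ofReal (d x) ≤ μ (Metric.ball z x) := hd2 x hx0 τ hτ μ hμ hrep z
      have h2 : μ (Metric.ball z x) ≤ μ (Metric.ball z a) :=
        measure_mono (Metric.ball_subset_ball hxa)
      calc d x = (ENNReal.ofReal (d x)).toReal := (ENNReal.toReal_ofReal (hd1 x).1.le).symm
        _ ≤ (μ (Metric.ball z a)).toReal := ENNReal.toReal_mono hne (h1.trans h2)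
    calc ENNReal.ofReal (sSup (d '' Set.Ioc 0 a)) ≤ ENNReal.ofReal (μ (Metric.ball z a)).toReal :=
          ENNReal.ofReal_le_ofReal hΔ
      _ = μ (Metric.ball z a) := ENNReal.ofReal_toReal hne
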